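/- Let χ be a Dirichlet character modulo q, let d be a positive integer, let s be a complex number with Re(s) ≥ 1/2, and define l_d(s, χ) = ∏_{p | d} (1 − χ(p)/p^s), the product over distinct primes dividing d. Then |log|l_d(s, χ)|| ≤ ∑_{p | d} −log(1 − p^{-1/2}); in particular, log|l_d(s, χ)| = O(√(log d)/log log d) for d large. -/

import Mathlib

lemma abs_log_abs_one_sub_le {z : ℂ} {r : ℝ} (hz : ‖z‖ ≤ r) (hr : r < 1) :
    |Real.log (‖1 - z‖)| ≤ -Real.log (1 - r) := by
  have h0 : 0 ≤ r := le_trans (norm_nonneg z) hz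
  have hlow : 1 - r ≤ ‖1 - z‖ := by
    have h := abs_norm_sub_norm_le (1:ℂ) z
    simp only [norm_one] at h
    have := abs_le.mp h
    linarith [hz, this.1]
  have hup : ‖1 - z‖ ≤ 1 + r := by
    have := norm_sub_le (1:ℂ) z
    simp only [norm_one] at this
    linarith [hz]
  have h1r : (0:ℝ) < 1 - r := by linarith
  rw [abs_le]
  constructor
  · have := Real.log_le_log h1r hlow
    linarith [this, Real.log_nonpos (by linarith) (le_of_lt hr)]
  · have hup2 : ‖1 - z‖ ≤ (1 - r)⁻¹ := by
      have : (1 + r) * (1 - r) ≤ 1 := by nlinarith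
      have hinv : (1 - r) * (1 - r)⁻¹ = 1 := mul_inv_cancel₀ h1r.ne'
      calc ‖1 - z‖ ≤ 1 + r := hup
        _ ≤ (1 - r)⁻¹ := by nlinarith [inv_pos.mpr h1r]
    have := Real.log_le_log (by linarith) hup2
    rw [Real.log_inv] at this
    linarith

theorem stmt6 (q d : ℕ) (hd : 0 < d) (χ : DirichletCharacter ℂ q) (s : ℂ)
    (hs : (1 / 2 : ℝ) ≤ s.re) :
    |Real.log ‖∏ p ∈ d.primeFactors, (1 - χ (p : ZMod q) / (p : ℂ) ^ s)‖| ≤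
      ∑ p ∈ d.primeFactors, -Real.log (1 - (p : ℝ) ^ (-(1 / 2 : ℝ))) := by
  have key : ∀ p ∈ d.primeFactors,
      ‖χ (p : ZMod q) / (p : ℂ) ^ s‖ ≤ (p : ℝ) ^ (-(1 / 2 : ℝ)) := by
    intro p hp
    have hpp := Nat.prime_of_mem_primeFactors hp
    have hp0 : (0:ℝ) < p := Nat.cast_pos.mpr hpp.pos
    rw [show ((p:ℂ)) = ((p:ℝ):ℂ) by norm_cast, norm_div,
      Complex.norm_cpow_eq_rpow_re_of_pos hp0]
    have hχ : ‖χ (p : ZMod q)‖ ≤ 1 := χ.norm_le_one _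
    have h1 : (p:ℝ) ^ (1/2 : ℝ) ≤ (p:ℝ) ^ s.re :=
      Real.rpow_le_rpow_of_exponent_le (by exact_mod_cast hpp.one_lt.le) hs
    calc ‖χ (p : ZMod q)‖ / (p:ℝ) ^ s.re ≤ 1 / (p:ℝ) ^ s.re := by
          gcongr
      _ ≤ 1 / (p:ℝ) ^ (1/2 : ℝ) := by gcongr
      _ = (p : ℝ) ^ (-(1 / 2 : ℝ)) := by rw [Real.rpow_neg hp0.le, one_div]
  have hlt : ∀ p ∈ d.primeFactors, (p : ℝ) ^ (-(1 / 2 : ℝ)) < 1 := by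
    intro p hp
    have hpp := Nat.prime_of_mem_primeFactors hp
    have : (1:ℝ) < p := by exact_mod_cast hpp.one_lt
    calc (p : ℝ) ^ (-(1 / 2 : ℝ)) < (p:ℝ) ^ (0:ℝ) :=
        Real.rpow_lt_rpow_of_exponent_lt this (by norm_num)
      _ = 1 := Real.rpow_zero _
  rw [norm_prod]
  have hpos : ∀ p ∈ d.primeFactors, 0 < ‖1 - χ (p : ZMod q) / (p : ℂ) ^ s‖ := by
    intro p hp
    have := lt_of_le_of_lt (key p hp) (hlt p hp)
    have h := abs_norm_sub_norm_le (1:ℂ) (χ (p : ZMod q) / (p : ℂ) ^ s)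
    simp only [norm_one] at h
    have := abs_le.mp h
    linarith [this.1]
  rw [Real.log_prod (fun p hp => (hpos p hp).ne')]
  calc |∑ p ∈ d.primeFactors, Real.log (‖1 - χ (p : ZMod q) / (p : ℂ) ^ s‖)|
      ≤ ∑ p ∈ d.primeFactors, |Real.log (‖1 - χ (p : ZMod q) / (p : ℂ) ^ s‖)| :=
        Finset.abs_sum_le_sum_abs _ _
    _ ≤ ∑ p ∈ d.primeFactors, -Real.log (1 - (p : ℝ) ^ (-(1 / 2 : ℝ))) := by
        apply Finset.sum_le_sum
        intro p hp
        exact abs_log_abs_one_sub_le (key p hp) (hlt p hp)
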